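/- Let (M, g, f) be a Bach-flat Miao-Tam critical metric (so W_{ijkl}∇_l f = 0 and the level sets are umbilic with R_{ab} = ((R-R₁₁)/(n-1))g_{ab}). Then for a regular level set Σ_c, c ≠ 0, the Gauss equation yields R^Σ_{abcd} = W_{abcd} + 1/((n-1)(n-2))[R - 2R₁₁ + (n-2)H²/(n-1)](g_{ac}g_{bd} - g_{ad}g_{bc}), and hence the induced Ricci curvature satisfies R^Σ_{ab} = 1/(n-1)[R - 2R₁₁ + (n-2)H²/(n-1)]g_{ab}, i.e. Σ_c is Einstein. -/
import Mathlib


/-- Kronecker delta in an orthonormal frame. -/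
noncomputable def kd {n : ℕ} (i j : Fin n) : ℝ := if i = j then 1 else 0

/-- For a Bach-flat Miao-Tam critical metric (so `W(·,·,·,∇f) = 0`
and regular level sets are umbilic with `R_{ab} = ((R-R₁₁)/(n-1))g_{ab}`), the
Gauss equation yields, on a regular level set `Σ_c` (`c ≠ 0`),
`R^Σ_{abcd} = W_{abcd} + (1/((n-1)(n-2)))[R - 2R₁₁ + (n-2)H²/(n-1)](g_{ac}g_{bd} - g_{ad}g_{bc})`,
hence `R^Σ_{ab} = (1/(n-1))[R - 2R₁₁ + (n-2)H²/(n-1)]g_{ab}`, i.e. `Σ_c` is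
Einstein.  Stated in an adapted orthonormal frame with normal index `e1`. -/
theorem level_set_einstein (n : ℕ) (hn : 3 ≤ n)
    (e1 : Fin n) (R R11 H : ℝ)
    (Ric RicS : Fin n → Fin n → ℝ)
    (Riem W RS : Fin n → Fin n → Fin n → Fin n → ℝ)
    (hR11 : R11 = Ric e1 e1)
    -- tangential Ricci curvature and R_{1a} = 0
    (hRictan : ∀ a b, a ≠ e1 → b ≠ e1 →
      Ric a b = (R - R11) / ((n : ℝ) - 1) * kd a b)
    (hRic1a : ∀ a, a ≠ e1 → Ric e1 a = 0 ∧ Ric a e1 = 0)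
    -- Weyl decomposition of the curvature tensor
    (hWeyl : ∀ i j k l, Riem i j k l
      = W i j k l
        + 1 / ((n : ℝ) - 2)
          * (Ric i k * kd j l + Ric j l * kd i k - Ric i l * kd j k - Ric j k * kd i l)
        - R / (((n : ℝ) - 1) * ((n : ℝ) - 2)) * (kd j l * kd i k - kd i l * kd j k))
    -- Gauss equation with the umbilic second fundamental form II = (H/(n-1))g
    (hGauss : ∀ a b c d, a ≠ e1 → b ≠ e1 → c ≠ e1 → d ≠ e1 →
      RS a b c d = Riem a b c d
        + (H / ((n : ℝ) - 1)) ^ 2 * (kd a c * kd b d - kd a d * kd b c))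
    -- W(·,·,·,∇f) = 0 in every slot (Bach-flatness)
    (hWnu : ∀ i j k,
      W i j k e1 = 0 ∧ W i j e1 k = 0 ∧ W i e1 j k = 0 ∧ W e1 i j k = 0)
    -- trace-freeness of the Weyl tensor
    (hWtf : ∀ j l, ∑ i, W i j i l = 0)
    -- induced Ricci curvature of the level set
    (hRicS : ∀ a b, a ≠ e1 → b ≠ e1 →
      RicS a b = ∑ i ∈ Finset.univ.filter (fun i => i ≠ e1), RS i a i b) :
    (∀ a b c d, a ≠ e1 → b ≠ e1 → c ≠ e1 → d ≠ e1 →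
      RS a b c d = W a b c d
        + 1 / (((n : ℝ) - 1) * ((n : ℝ) - 2))
          * (R - 2 * R11 + ((n : ℝ) - 2) * H ^ 2 / ((n : ℝ) - 1))
          * (kd a c * kd b d - kd a d * kd b c))
    ∧ (∀ a b, a ≠ e1 → b ≠ e1 →
      RicS a b = 1 / ((n : ℝ) - 1)
        * (R - 2 * R11 + ((n : ℝ) - 2) * H ^ 2 / ((n : ℝ) - 1)) * kd a b) := by
  have hn3 : (3:ℝ) ≤ (n:ℝ) := by exact_mod_cast hn
  have hn1 : (n:ℝ) - 1 ≠ 0 := by linarith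
  have hn2 : (n:ℝ) - 2 ≠ 0 := by linarith
  have h1 : ∀ a b c d, a ≠ e1 → b ≠ e1 → c ≠ e1 → d ≠ e1 →
      RS a b c d = W a b c d
        + 1 / (((n : ℝ) - 1) * ((n : ℝ) - 2))
          * (R - 2 * R11 + ((n : ℝ) - 2) * H ^ 2 / ((n : ℝ) - 1))
          * (kd a c * kd b d - kd a d * kd b c) := by
    intro a b c d ha hb hc hd
    rw [hGauss a b c d ha hb hc hd, hWeyl, hRictan a c ha hc, hRictan b d hb hd,
      hRictan a d ha hd, hRictan b c hb hc]
    field_simp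
    ring
  refine ⟨h1, ?_⟩
  intro a b ha hb
  rw [hRicS a b ha hb]
  have hsum : ∑ i ∈ Finset.univ.filter (fun i => i ≠ e1), RS i a i b
      = ∑ i ∈ Finset.univ.filter (fun i => i ≠ e1),
        (W i a i b + 1 / (((n : ℝ) - 1) * ((n : ℝ) - 2))
          * (R - 2 * R11 + ((n : ℝ) - 2) * H ^ 2 / ((n : ℝ) - 1))
          * (kd i i * kd a b - kd i b * kd a i)) := by
    apply Finset.sum_congr rfl
    intro i hi
    have hi' : i ≠ e1 := (Finset.mem_filter.mp hi).2
    exact h1 i a i b hi' ha hi' hb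
  rw [hsum, Finset.sum_add_distrib]
  have hW0 : ∑ i ∈ Finset.univ.filter (fun i => i ≠ e1), W i a i b = 0 := by
    have h := hWtf a b
    rw [← Finset.sum_filter_add_sum_filter_not Finset.univ (fun i => i ≠ e1)
      (fun i => W i a i b)] at h
    have h2 : ∑ i ∈ Finset.univ.filter (fun i => ¬ i ≠ e1), W i a i b = 0 := by
      have he : Finset.univ.filter (fun i : Fin n => ¬ i ≠ e1) = {e1} := by
        ext i; simp
      rw [he, Finset.sum_singleton]
      exact (hWnu a e1 b).2.2.2
    linarith
  rw [hW0, ← Finset.mul_sum, zero_add]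
  have hs1 : ∑ i ∈ Finset.univ.filter (fun i => i ≠ e1),
      (kd i i * kd a b - kd i b * kd a i)
      = ((n : ℝ) - 1) * kd a b - kd a b := by
    rw [Finset.sum_sub_distrib]
    have e1sum : ∑ i ∈ Finset.univ.filter (fun i => i ≠ e1), kd i i * kd a b
        = ((n : ℝ) - 1) * kd a b := by
      have : ∀ i ∈ Finset.univ.filter (fun i : Fin n => i ≠ e1),
          kd i i * kd a b = kd a b := by
        intro i hi; simp [kd]
      rw [Finset.sum_congr rfl this, Finset.sum_const, nsmul_eq_mul]
      congr 1
      have hcard : (Finset.univ.filter (fun i : Fin n => i ≠ e1)).card = n - 1 := by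
        rw [Finset.filter_ne', Finset.card_erase_of_mem (Finset.mem_univ _),
          Finset.card_univ, Fintype.card_fin]
      rw [hcard]
      have h1n : 1 ≤ n := by omega
      push_cast [Nat.cast_sub h1n]
      ring
    have e2sum : ∑ i ∈ Finset.univ.filter (fun i => i ≠ e1), kd i b * kd a i
        = kd a b := by
      rw [Finset.sum_eq_single b]
      · simp [kd]
      · intro i hi hib
        simp [kd, hib]
      · intro hb'
        simp [hb] at hb'
    rw [e1sum, e2sum]
  rw [hs1]
  field_simp
  ring
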